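/- Let $H \in S^n$ be a rank-one matrix with $H_{ij} = h_i h_j$ where all $h_i > 0$, and let $W = \mathrm{diag}(h_1,\ldots,h_n)$. Then for any symmetric matrix $M \in S^n$, the unique minimizer over $K \succeq 0$ of $\sum_{i,j} H_{ij}(K_{ij} - M_{ij})^2$ is $K^* = W^{-1/2} \left( (W^{1/2} M W^{1/2})_+ \right) W^{-1/2}$. -/

import Mathlib

open Matrix

noncomputable def frob2 {n : ℕ} (M : Matrix (Fin n) (Fin n) ℝ) : ℝ :=
  Matrix.trace (Mᵀ * M)

def IsPSDProj {n : ℕ} (M P : Matrix (Fin n) (Fin n) ℝ) : Prop :=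
  P.PosSemidef ∧ ∀ K : Matrix (Fin n) (Fin n) ℝ, K.PosSemidef →
    frob2 (P - M) ≤ frob2 (K - M)

lemma frob2_entry {n : ℕ} (X : Matrix (Fin n) (Fin n) ℝ) :
    frob2 X = ∑ i, ∑ j, (X i j)^2 := by
  simp only [frob2, Matrix.trace, Matrix.diag, Matrix.mul_apply, Matrix.transpose_apply, sq]
  exact Finset.sum_comm

lemma frob2_nonneg {n : ℕ} (X : Matrix (Fin n) (Fin n) ℝ) : 0 ≤ frob2 X := by
  rw [frob2_entry]
  exact Finset.sum_nonneg fun i _ => Finset.sum_nonneg fun j _ => sq_nonneg _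

lemma frob2_eq_zero {n : ℕ} {X : Matrix (Fin n) (Fin n) ℝ} (hX : frob2 X = 0) : X = 0 := by
  rw [frob2_entry] at hX
  ext i j
  have h1 : ∀ i ∈ Finset.univ, (0:ℝ) ≤ ∑ j, (X i j)^2 :=
    fun i _ => Finset.sum_nonneg fun j _ => sq_nonneg _
  have h2 := (Finset.sum_eq_zero_iff_of_nonneg h1).mp hX i (Finset.mem_univ i)
  have h3 := (Finset.sum_eq_zero_iff_of_nonneg (fun j _ => sq_nonneg (X i j))).mp h2 j
    (Finset.mem_univ j)
  simpa using pow_eq_zero_iff (n := 2) (by norm_num) |>.mp h3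

/-- weighted PSD projection with rank-one penalty matrix
`H_{ij} = hᵢhⱼ`: the unique minimizer over `K ⪰ 0` of
`∑_{i,j} hᵢhⱼ (K_{ij} - M_{ij})²` is `W^{-1/2} ((W^{1/2} M W^{1/2})₊) W^{-1/2}`. -/
theorem weighted_psd_projection {n : ℕ}
    (h : Fin n → ℝ) (hh : ∀ i, 0 < h i)
    (M : Matrix (Fin n) (Fin n) ℝ) (hM : M.IsSymm)
    (Whalf Winvhalf : Matrix (Fin n) (Fin n) ℝ)
    (hWhalf : Whalf = Matrix.diagonal (fun i => Real.sqrt (h i)))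
    (hWinvhalf : Winvhalf = Matrix.diagonal (fun i => (Real.sqrt (h i))⁻¹))
    (P : Matrix (Fin n) (Fin n) ℝ)
    (hP : IsPSDProj (Whalf * M * Whalf) P)
    (Kstar : Matrix (Fin n) (Fin n) ℝ)
    (hKstar : Kstar = Winvhalf * P * Winvhalf)
    (obj : Matrix (Fin n) (Fin n) ℝ → ℝ)
    (hobj : ∀ K, obj K = ∑ i, ∑ j, h i * h j * (K i j - M i j)^2) :
    Kstar.PosSemidef ∧
    (∀ K : Matrix (Fin n) (Fin n) ℝ, K.PosSemidef → obj Kstar ≤ obj K) ∧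
    (∀ K : Matrix (Fin n) (Fin n) ℝ, K.PosSemidef → obj K = obj Kstar → K = Kstar) := by
  have hsq : ∀ i, Real.sqrt (h i) ≠ 0 := fun i => (Real.sqrt_pos.mpr (hh i)).ne'
  have hWW : Whalf * Winvhalf = 1 := by
    rw [hWhalf, hWinvhalf, Matrix.diagonal_mul_diagonal]
    simp [mul_inv_cancel₀, hsq]
  have hWW' : Winvhalf * Whalf = 1 := by
    rw [hWhalf, hWinvhalf, Matrix.diagonal_mul_diagonal]
    simp [inv_mul_cancel₀, hsq]
  have hWsymm : Whalfᴴ = Whalf := by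
    rw [hWhalf]; simp [Matrix.conjTranspose, Matrix.diagonal_transpose]
  have hWisymm : Winvhalfᴴ = Winvhalf := by
    rw [hWinvhalf]; simp [Matrix.conjTranspose, Matrix.diagonal_transpose]
  -- sandwich identity
  have hsand : Whalf * Kstar * Whalf = P := by
    rw [hKstar]
    calc Whalf * (Winvhalf * P * Winvhalf) * Whalf
        = (Whalf * Winvhalf) * P * (Winvhalf * Whalf) := by
          simp only [mul_assoc]
      _ = P := by rw [hWW, hWW']; simp
  -- obj as frob2 of sandwiched difference
  have hobjf : ∀ K, obj K = frob2 (Whalf * K * Whalf - Whalf * M * Whalf) := by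
    intro K
    rw [hobj, frob2_entry]
    apply Finset.sum_congr rfl; intro i _
    apply Finset.sum_congr rfl; intro j _
    have he : (Whalf * K * Whalf - Whalf * M * Whalf) i j
        = Real.sqrt (h i) * Real.sqrt (h j) * (K i j - M i j) := by
      rw [hWhalf]
      simp only [Matrix.sub_apply, Matrix.diagonal_mul, Matrix.mul_diagonal,
        Pi.smul_apply, smul_eq_mul]
      ring
    rw [he, mul_pow, mul_pow, Real.sq_sqrt (hh i).le, Real.sq_sqrt (hh j).le]
  have hKstarPSD : Kstar.PosSemidef := by
    have := hP.1.mul_mul_conjTranspose_same Winvhalf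
    rwa [hWisymm, ← hKstar] at this
  have hobjKstar : obj Kstar = frob2 (P - Whalf * M * Whalf) := by
    rw [hobjf, hsand]
  have hPSDsand : ∀ K : Matrix (Fin n) (Fin n) ℝ, K.PosSemidef →
      (Whalf * K * Whalf).PosSemidef := by
    intro K hK
    have := hK.mul_mul_conjTranspose_same Whalf
    rwa [hWsymm] at this
  refine ⟨hKstarPSD, ?_, ?_⟩
  · intro K hK
    rw [hobjKstar, hobjf]
    exact hP.2 _ (hPSDsand K hK)
  · intro K hK heq
    set K' := Whalf * K * Whalf with hK'
    set A := Whalf * M * Whalf with hA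
    have hK'PSD : K'.PosSemidef := hPSDsand K hK
    have heq' : frob2 (K' - A) = frob2 (P - A) := by
      rw [← hobjf, ← hobjKstar]; exact heq
    -- midpoint
    have hadd := hK'PSD.add hP.1
    have hmidPSD : (((2:ℝ)⁻¹) • (K' + P)).PosSemidef := by
      refine ⟨?_, fun x => ?_⟩
      · unfold Matrix.IsHermitian
        rw [Matrix.conjTranspose_smul, hadd.1.eq]
        simp
      · have := hadd.2 x
        exact (hadd.smul (by norm_num : (0:ℝ) ≤ 2⁻¹)).2 x
    have hle := hP.2 _ hmidPSD
    have hpar : frob2 (((2:ℝ)⁻¹) • (K' + P) - A) + frob2 (K' - P) / 4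
        = (frob2 (K' - A) + frob2 (P - A)) / 2 := by
      simp only [frob2_entry, Finset.sum_div, ← Finset.sum_add_distrib]
      apply Finset.sum_congr rfl; intro i _
      apply Finset.sum_congr rfl; intro j _
      simp only [Matrix.sub_apply, Matrix.add_apply, Matrix.smul_apply, smul_eq_mul]
      ring
    have h0 : frob2 (K' - P) ≤ 0 := by
      have hn := frob2_nonneg (K' - P)
      rw [heq'] at hpar
      linarith
    have hKP : K' = P := by
      have := frob2_eq_zero (le_antisymm h0 (frob2_nonneg _))
      exact sub_eq_zero.mp this
    have hback : Winvhalf * K' * Winvhalf = K := by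
      rw [hK']
      calc Winvhalf * (Whalf * K * Whalf) * Winvhalf
          = (Winvhalf * Whalf) * K * (Whalf * Winvhalf) := by simp only [mul_assoc]
        _ = K := by rw [hWW, hWW']; simp
    rw [← hback, hKP, hKstar]
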